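/- arXiv:1906.06931 — 2 statements merged into one kernel-verified Lean document; each statement's English description precedes it below -/
import Mathlib

section
/- Let n ≥ 1, let v, w : {1,…,n} → ℕ with vᵢ ≥ 1 and wᵢ ≥ 1 for all i, let v₀, w₀ ∈ ℕ, and set V = Σᵢ₌₁ⁿ vᵢ. Assume v₀ < V and 2·v₀ ≤ V. Let ε be a real number with 0 < ε ≤ 1/3 and set m = ε/(V − v₀). Consider the Markov chain with state set S = {ŝ, s₋} ∪ {(i,j) | 1 ≤ i ≤ n, 1 ≤ j ≤ wᵢ}, initial state ŝ, and transitions δ(ŝ) = Σᵢ₌₁ⁿ m·vᵢ·δ_{(i,1)} + (1 − m·V)·δ_{s₋}, δ((i,j)) = δ_{(i,j+1)} for 1 ≤ j < wᵢ, and δ((i,wᵢ)) = δ_{(i,wᵢ)} and δ(s₋) = δ_{s₋} (absorbing). Then this Markov chain has an ε-core of cardinality at most w₀ + 1 if and only if there exists a set I ⊆ {1,…,n} with Σ_{i∈I} vᵢ > v₀ and Σ_{i∈I} wᵢ < w₀. -/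
open MeasureTheory

/-- A Markov chain: an initial state and a transition distribution for each state. -/
structure MC (S : Type*) where
  init : S
  trans : S → PMF S

/-- The space of infinite paths `s₀ s₁ s₂ ⋯` of a Markov chain. -/
def MCTraj (S : Type*) := ℕ → S

instance {S : Type*} : MeasurableSpace (MCTraj S) :=
  @MeasurableSpace.pi ℕ (fun _ => S) (fun _ => ⊤)

variable {S : Type*}

/-- The probability that a path of the chain starting in state `s` begins with exactly the
finite sequence `pre` of states. -/
noncomputable def mcCylProb [DecidableEq S] (M : MC S) : S → List S → ENNReal
  | _, [] => 1
  | s, t :: rest =>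
      (if t = s then 1 else 0) * ∑' s' : S, (M.trans s) s' * mcCylProb M s' rest

/-- The cylinder set of all infinite paths whose first coordinates agree with `pre`. -/
def MCCyl (pre : List S) : Set (MCTraj S) :=
  {ω | ∀ i : Fin pre.length, ω i = pre.get i}

/-- `P` is the family of path measures of `M` induced (via the Ionescu–Tulcea construction)
by the start states: each `P s` is a probability measure on infinite paths starting in `s`
whose value on every cylinder is the product of the transition probabilities. -/
def IsMCPathMeasure [DecidableEq S] (M : MC S) (P : S → Measure (MCTraj S)) : Prop :=
  (∀ s, IsProbabilityMeasure (P s)) ∧ ∀ s pre, P s (MCCyl pre) = mcCylProb M s pre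

/-- The set of paths that visit `R` at some point. -/
def MCReach (R : Set S) : Set (MCTraj S) := {ω | ∃ i, ω i ∈ R}

/-- `C` is an `ε`-core of the chain: the probability of ever leaving `C` is `< ε`. -/
def IsMCCore [DecidableEq S] (M : MC S) (P : S → Measure (MCTraj S)) (ε : ℝ)
    (C : Set S) : Prop :=
  P M.init (MCReach Cᶜ) < ENNReal.ofReal ε

/-- `C` is a minimal `ε`-core: it is an `ε`-core and no proper subset of it is one. -/
def IsMinimalMCCore [DecidableEq S] (M : MC S) (P : S → Measure (MCTraj S)) (ε : ℝ)
    (C : Set S) : Prop :=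
  IsMCCore M P ε C ∧ ∀ C' ⊂ C, ¬ IsMCCore M P ε C'

/-- The states of the knapsack chain: `none` is the initial state `ŝ`, `some none` is the
sink `s₋`, and `some (some ⟨i, j⟩)` is the `j`-th state of the chain of the `i`-th item. -/
abbrev KSState (n : ℕ) (w : Fin n → ℕ) := Option (Option ((i : Fin n) × Fin (w i)))

/-- The successor weights of the initial state `ŝ`: weight `m·vᵢ` on the first state of
item `i` (where `m = ε/(V − v₀)` and `V = Σᵢ vᵢ`) and weight `1 − m·V` on the sink. -/
noncomputable def ksWeight (n : ℕ) (v w : Fin n → ℕ) (v0 : ℕ) (ε : ℝ) :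
    KSState n w → ENNReal
  | none => 0
  | some none =>
      1 - ENNReal.ofReal (ε / (((∑ i, v i : ℕ) : ℝ) - (v0 : ℝ))) * ((∑ i, v i : ℕ) : ENNReal)
  | some (some ⟨i, j⟩) =>
      if (j : ℕ) = 0 then
        ENNReal.ofReal (ε / (((∑ i, v i : ℕ) : ℝ) - (v0 : ℝ))) * ((v i : ℕ) : ENNReal)
      else 0

lemma ksWeight_sum (n : ℕ) (v w : Fin n → ℕ) (v0 : ℕ) (ε : ℝ)
    (hw : ∀ i, 1 ≤ w i) (hv0 : v0 < ∑ i, v i) (h2 : 2 * v0 ≤ ∑ i, v i)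
    (hε1 : 0 < ε) (hε2 : ε ≤ 1 / 3) :
    ∑ t : KSState n w, ksWeight n v w v0 ε t = 1 := by
  classical
  set V : ℕ := ∑ i, v i with hV
  set m : ℝ := ε / ((V : ℝ) - (v0 : ℝ)) with hm
  set x : ENNReal := ENNReal.ofReal m with hx
  have hVv : (0 : ℝ) < (V : ℝ) - (v0 : ℝ) := by
    have : (v0 : ℝ) < (V : ℝ) := by exact_mod_cast hv0
    linarith
  have hm0 : 0 ≤ m := le_of_lt (div_pos hε1 hVv)
  -- the inner sums over each item chain
  have hinner : ∀ i : Fin n,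
      (∑ j : Fin (w i),
        ksWeight n v w v0 ε (some (some ⟨i, j⟩))) = x * ((v i : ℕ) : ENNReal) := by
    intro i
    have h0 : 0 < w i := hw i
    rw [Finset.sum_eq_single (⟨0, h0⟩ : Fin (w i))]
    · simp only [ksWeight, if_true]; rfl
    · intro b _ hb
      have hb0 : (b : ℕ) ≠ 0 := fun hc => hb (Fin.ext hc)
      simp [ksWeight, hb0]
    · intro h; exact absurd (Finset.mem_univ _) h
  have hsum_sigma :
      (∑ t : (i : Fin n) × Fin (w i), ksWeight n v w v0 ε (some (some t)))
        = x * (V : ENNReal) := by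
    rw [← Finset.univ_sigma_univ, Finset.sum_sigma]
    calc (∑ i : Fin n, ∑ j : Fin (w i), ksWeight n v w v0 ε (some (some ⟨i, j⟩)))
        = ∑ i : Fin n, x * ((v i : ℕ) : ENNReal) := by
          exact Finset.sum_congr rfl fun i _ => hinner i
      _ = x * ∑ i : Fin n, ((v i : ℕ) : ENNReal) := by rw [Finset.mul_sum]
      _ = x * (V : ENNReal) := by rw [hV]; push_cast; ring
  have hxV : x * (V : ENNReal) ≤ 1 := by
    have hVcast : ((V : ℕ) : ENNReal) = ENNReal.ofReal (V : ℝ) := by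
      rw [ENNReal.ofReal_natCast]
    have hmV : m * (V : ℝ) ≤ 1 := by
      rw [hm, div_mul_eq_mul_div, div_le_one hVv]
      have hV0 : (0 : ℝ) ≤ (V : ℝ) := Nat.cast_nonneg _
      have h2' : (V : ℝ) ≤ 2 * ((V : ℝ) - (v0 : ℝ)) := by
        have : 2 * (v0 : ℝ) ≤ (V : ℝ) := by exact_mod_cast h2
        linarith
      have hεV : ε * (V : ℝ) ≤ 1 / 3 * (V : ℝ) := mul_le_mul_of_nonneg_right hε2 hV0
      linarith
    rw [hx, hVcast, ← ENNReal.ofReal_mul hm0]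
    exact ENNReal.ofReal_le_one.mpr hmV
  rw [Fintype.sum_option, Fintype.sum_option, hsum_sigma]
  have h1 : ksWeight n v w v0 ε none = 0 := rfl
  have h2' : ksWeight n v w v0 ε (some none) = 1 - x * (V : ENNReal) := rfl
  rw [h1, h2', zero_add, tsub_add_cancel_of_le hxV]

/-- The Markov chain used in the reduction from 0/1-Knapsack to finding small cores:
`δ(ŝ) = Σᵢ m·vᵢ·δ_{(i,1)} + (1 − m·V)·δ_{s₋}` with `m = ε/(V − v₀)`, the states of each
item chain lead deterministically to the next one, and the last state of each item chain
as well as the sink are absorbing. -/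
noncomputable def knapsackChain (n : ℕ) (v w : Fin n → ℕ) (v0 : ℕ) (ε : ℝ)
    (hw : ∀ i, 1 ≤ w i) (hv0 : v0 < ∑ i, v i) (h2 : 2 * v0 ≤ ∑ i, v i)
    (hε1 : 0 < ε) (hε2 : ε ≤ 1 / 3) : MC (KSState n w) where
  init := none
  trans := fun s =>
    match s with
    | none => PMF.ofFintype (ksWeight n v w v0 ε) (ksWeight_sum n v w v0 ε hw hv0 h2 hε1 hε2)
    | some none => PMF.pure (some none)
    | some (some ⟨i, j⟩) =>
        if h : (j : ℕ) + 1 < w i then PMF.pure (some (some ⟨i, ⟨(j : ℕ) + 1, h⟩⟩))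
        else PMF.pure (some (some ⟨i, j⟩))

section General

set_option linter.unusedSectionVars false

variable {S : Type*} [DecidableEq S] (M : MC S)

lemma mcCylProb_nil (s : S) : mcCylProb M s [] = 1 := rfl

lemma mcCylProb_cons_ne {t s : S} (h : t ≠ s) (r : List S) :
    mcCylProb M s (t :: r) = 0 := by
  simp [mcCylProb, h]

lemma mcCylProb_cons_self (s : S) (r : List S) :
    mcCylProb M s (s :: r) = ∑' s' : S, (M.trans s) s' * mcCylProb M s' r := by
  simp [mcCylProb]

lemma mcCylProb_single (s : S) : mcCylProb M s [s] = 1 := by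
  rw [mcCylProb_cons_self]
  simp only [mcCylProb_nil, mul_one]
  exact (M.trans s).tsum_coe

lemma tsum_mul_mcCylProb (f : S → ENNReal) (t : S) (r : List S) :
    ∑' s' : S, f s' * mcCylProb M s' (t :: r) = f t * mcCylProb M t (t :: r) := by
  refine tsum_eq_single t fun b hb => ?_
  rw [mcCylProb_cons_ne M (Ne.symm hb), mul_zero]

lemma mcCylProb_pure {s x : S} (h : M.trans s = PMF.pure x) (r : List S) :
    mcCylProb M s (s :: r) = mcCylProb M x r := by
  rw [mcCylProb_cons_self, h]
  rw [show ∑' s' : S, (PMF.pure x) s' * mcCylProb M s' r = mcCylProb M x r from ?_]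
  refine (tsum_eq_single x fun b hb => ?_).trans (by rw [PMF.pure_apply, if_pos rfl, one_mul])
  rw [PMF.pure_apply, if_neg hb, zero_mul]

lemma mcCylProb_det (q : ℕ → S) (h : ∀ k, M.trans (q k) = PMF.pure (q (k + 1))) :
    ∀ L, mcCylProb M (q 0) (List.ofFn fun k : Fin L => q k) = 1 := by
  intro L
  induction L generalizing q with
  | zero => rfl
  | succ L ih =>
      rw [List.ofFn_succ]
      have : mcCylProb M (q 0) (q 0 :: List.ofFn fun k : Fin L => q (k + 1)) =
          mcCylProb M (q 1) (List.ofFn fun k : Fin L => q (k + 1)) :=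
        mcCylProb_pure M (h 0) _
      simpa using this.trans (ih (fun k => q (k + 1)) (fun k => h (k + 1)))

lemma mem_MCCyl_ofFn {L : ℕ} (p : ℕ → S) (ω : MCTraj S) :
    ω ∈ MCCyl (List.ofFn fun k : Fin L => p k) ↔ ∀ k < L, ω k = p k := by
  constructor
  · intro h k hk
    have := h ⟨k, by simpa using hk⟩
    simpa using this
  · intro h i
    have hi : (i : ℕ) < L := by have := i.2; simpa using this
    simp only [List.get_ofFn]
    have := h i hi
    simpa using this

lemma measurableSet_MCCyl (pre : List S) : MeasurableSet (MCCyl pre) := by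
  have : MCCyl pre = ⋂ i : Fin pre.length, {ω : MCTraj S | ω i = pre.get i} := by
    ext ω; simp [MCCyl, Set.mem_iInter]
  rw [this]
  refine MeasurableSet.iInter fun i => ?_
  letI : MeasurableSpace S := ⊤
  exact measurable_pi_apply (X := fun _ : ℕ => S) (i : ℕ) (MeasurableSpace.measurableSet_top (s := {x : S | x = pre.get i}))

lemma measurableSet_singleton_traj (p : MCTraj S) : MeasurableSet ({p} : Set (MCTraj S)) := by
  have : ({p} : Set (MCTraj S)) = ⋂ k : ℕ, {ω : MCTraj S | ω k = p k} := by
    ext ω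
    simp only [Set.mem_singleton_iff, Set.mem_iInter, Set.mem_setOf_eq]
    exact ⟨fun h k => by rw [h], fun h => funext h⟩
  rw [this]
  letI : MeasurableSpace S := ⊤
  exact MeasurableSet.iInter fun k =>
    measurable_pi_apply (X := fun _ : ℕ => S) k (MeasurableSpace.measurableSet_top (s := {x : S | x = p k}))

lemma measurableSet_MCReach (R : Set S) : MeasurableSet (MCReach R : Set (MCTraj S)) := by
  have : (MCReach R : Set (MCTraj S)) = ⋃ k : ℕ, (fun ω : MCTraj S => ω k) ⁻¹' R := by
    ext ω; simp [MCReach]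
  rw [this]
  letI : MeasurableSpace S := ⊤
  exact MeasurableSet.iUnion fun k =>
    measurable_pi_apply (X := fun _ : ℕ => S) k (MeasurableSpace.measurableSet_top (s := R))

lemma singleton_eq_iInter_cyl (p : MCTraj S) :
    ({p} : Set (MCTraj S)) = ⋂ L : ℕ, MCCyl (List.ofFn fun k : Fin L => p k) := by
  ext ω
  simp only [Set.mem_singleton_iff, Set.mem_iInter]
  constructor
  · intro h L
    refine (mem_MCCyl_ofFn p ω).mpr ?_
    intro k _; rw [h]
  · intro h
    funext k
    exact (mem_MCCyl_ofFn p ω).mp (h (k + 1)) k (Nat.lt_succ_self k)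

end General

section Knapsack

open ENNReal

variable {n : ℕ} {v w : Fin n → ℕ} {v0 : ℕ} {ε : ℝ}

/-- The legal infinite paths of the knapsack chain. -/
def ksLegal (w : Fin n → ℕ) (hw : ∀ i, 1 ≤ w i) (c : Option (Fin n)) : MCTraj (KSState n w) :=
  fun k =>
    match c, k with
    | none, 0 => none
    | none, _ + 1 => some none
    | some _, 0 => none
    | some i, k + 1 => some (some ⟨i, ⟨min k (w i - 1), by have := hw i; omega⟩⟩)

/-- The probability weight of each legal path. -/
noncomputable def ksWt (n : ℕ) (v : Fin n → ℕ) (v0 : ℕ) (ε : ℝ) : Option (Fin n) → ENNReal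
  | none =>
      1 - ENNReal.ofReal (ε / (((∑ i, v i : ℕ) : ℝ) - (v0 : ℝ))) * ((∑ i, v i : ℕ) : ENNReal)
  | some i =>
      ENNReal.ofReal (ε / (((∑ i, v i : ℕ) : ℝ) - (v0 : ℝ))) * ((v i : ℕ) : ENNReal)

variable (hw : ∀ i, 1 ≤ w i) (hv0 : v0 < ∑ i, v i) (h2 : 2 * v0 ≤ ∑ i, v i)
  (hε1 : 0 < ε) (hε2 : ε ≤ 1 / 3)

include hv0 hε1 in
lemma ks_m_pos : 0 < ε / (((∑ i, v i : ℕ) : ℝ) - (v0 : ℝ)) := by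
  apply div_pos hε1
  have : (v0 : ℝ) < ((∑ i, v i : ℕ) : ℝ) := by exact_mod_cast hv0
  linarith

include hv0 h2 hε1 in
lemma ks_mV_le : ε / (((∑ i, v i : ℕ) : ℝ) - (v0 : ℝ)) * ((∑ i, v i : ℕ) : ℝ) ≤ 2 * ε := by
  have hVv : (0 : ℝ) < ((∑ i, v i : ℕ) : ℝ) - (v0 : ℝ) := by
    have : (v0 : ℝ) < ((∑ i, v i : ℕ) : ℝ) := by exact_mod_cast hv0
    linarith
  rw [div_mul_eq_mul_div, div_le_iff₀ hVv]
  have h2' : ((∑ i, v i : ℕ) : ℝ) ≤ 2 * (((∑ i, v i : ℕ) : ℝ) - (v0 : ℝ)) := by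
    have : 2 * (v0 : ℝ) ≤ ((∑ i, v i : ℕ) : ℝ) := by exact_mod_cast h2
    linarith
  nlinarith [hε1.le]

include hv0 h2 hε1 hε2 in
lemma ks_xV_le_one :
    ENNReal.ofReal (ε / (((∑ i, v i : ℕ) : ℝ) - (v0 : ℝ))) * ((∑ i, v i : ℕ) : ENNReal) ≤ 1 := by
  rw [show ((∑ i, v i : ℕ) : ENNReal) = ENNReal.ofReal ((∑ i, v i : ℕ) : ℝ) from
    (ENNReal.ofReal_natCast _).symm, ← ENNReal.ofReal_mul (ks_m_pos hv0 hε1).le]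
  refine ENNReal.ofReal_le_one.mpr ?_
  have := ks_mV_le hv0 h2 hε1
  linarith

include hv0 h2 hε1 hε2 in
lemma ksWt_le_one (c : Option (Fin n)) : ksWt n v v0 ε c ≤ 1 := by
  cases c with
  | none => exact tsub_le_self
  | some i =>
      refine le_trans ?_ (ks_xV_le_one hv0 h2 hε1 hε2)
      refine mul_le_mul_right ?_ _
      exact_mod_cast Nat.cast_le.mpr (Finset.single_le_sum (f := fun i => v i)
        (fun _ _ => Nat.zero_le _) (Finset.mem_univ i))

include hv0 h2 hε1 hε2 in
lemma ksWt_sink_ge : ENNReal.ofReal ε ≤ ksWt n v v0 ε none := by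
  show ENNReal.ofReal ε ≤ 1 - _
  rw [show ((∑ i, v i : ℕ) : ENNReal) = ENNReal.ofReal ((∑ i, v i : ℕ) : ℝ) from
    (ENNReal.ofReal_natCast _).symm, ← ENNReal.ofReal_mul (ks_m_pos hv0 hε1).le]
  refine (ENNReal.cancel_of_ne ENNReal.ofReal_ne_top).le_tsub_of_add_le_right ?_
  rw [← ENNReal.ofReal_add hε1.le (mul_nonneg (ks_m_pos hv0 hε1).le (Nat.cast_nonneg _)), ← ENNReal.ofReal_one]
  refine ENNReal.ofReal_le_ofReal ?_
  have := ks_mV_le hv0 h2 hε1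
  linarith

end Knapsack

section Knapsack2

open scoped Classical

set_option linter.unusedSectionVars false
set_option maxHeartbeats 1000000

lemma ofFn_shift {α : Type*} (p : ℕ → α) (L : ℕ) :
    List.ofFn (fun k : Fin (L + 1) => p k) = p 0 :: List.ofFn (fun k : Fin L => p (k + 1)) := by
  rw [List.ofFn_succ]; rfl

variable {n : ℕ} {v w : Fin n → ℕ} {v0 : ℕ} {ε : ℝ}
  (hw : ∀ i, 1 ≤ w i) (hv0 : v0 < ∑ i, v i) (h2 : 2 * v0 ≤ ∑ i, v i)
  (hε1 : 0 < ε) (hε2 : ε ≤ 1 / 3)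

local notation "KC" => knapsackChain n v w v0 ε hw hv0 h2 hε1 hε2

lemma ks_trans_none_apply (s : KSState n w) :
    ((KC).trans none) s = ksWeight n v w v0 ε s := by
  rw [show (KC).trans none =
    PMF.ofFintype _ (ksWeight_sum n v w v0 ε hw hv0 h2 hε1 hε2) from rfl, PMF.ofFintype_apply]

lemma ks_legal_zero (c : Option (Fin n)) : ksLegal w hw c 0 = none := by
  cases c <;> rfl

lemma ks_legal_det (c : Option (Fin n)) (k : ℕ) :
    (KC).trans (ksLegal w hw c (k + 1)) = PMF.pure (ksLegal w hw c (k + 2)) := by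
  cases c with
  | none => rfl
  | some i =>
      have hwi := hw i
      simp only [ksLegal, knapsackChain]
      split_ifs with hlt
      · exact congrArg
          (fun x : Fin (w i) => PMF.pure (some (some (⟨i, x⟩ : (i : Fin n) × Fin (w i)))))
          (Fin.ext (show k ⊓ (w i - 1) + 1 = (k + 1) ⊓ (w i - 1) by omega))
      · exact congrArg
          (fun x : Fin (w i) => PMF.pure (some (some (⟨i, x⟩ : (i : Fin n) × Fin (w i)))))
          (Fin.ext (show k ⊓ (w i - 1) = (k + 1) ⊓ (w i - 1) by omega))

lemma ks_weight_legal_one (c : Option (Fin n)) :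
    ksWeight n v w v0 ε (ksLegal w hw c 1) = ksWt n v v0 ε c := by
  cases c with
  | none => rfl
  | some i =>
      show ksWeight n v w v0 ε (some (some ⟨i, ⟨min 0 (w i - 1), _⟩⟩)) = _
      simp [ksWeight, ksWt, Nat.zero_min]

lemma ks_cyl_prob (c : Option (Fin n)) (L : ℕ) :
    mcCylProb KC none (List.ofFn fun k : Fin (L + 2) => ksLegal w hw c k) =
      ksWt n v v0 ε c := by
  rw [ofFn_shift (ksLegal w hw c) (L + 1), ofFn_shift (fun m => ksLegal w hw c (m + 1)) L,
    ks_legal_zero, mcCylProb_cons_self, tsum_mul_mcCylProb]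
  have hdet : mcCylProb KC (ksLegal w hw c 1)
      (ksLegal w hw c 1 :: List.ofFn fun k : Fin L => ksLegal w hw c (k + 2)) = 1 := by
    have h := mcCylProb_det KC (fun k => ksLegal w hw c (k + 1))
      (fun k => ks_legal_det hw hv0 h2 hε1 hε2 c k) (L + 1)
    rw [ofFn_shift (fun m => ksLegal w hw c (m + 1)) L] at h
    exact h
  rw [hdet, mul_one, ks_trans_none_apply, ks_weight_legal_one]

lemma ks_legal_inj : Function.Injective (ksLegal w hw) := by
  intro a b h
  have h1 := congrFun h 1
  cases a with
  | none =>
      cases b with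
      | none => rfl
      | some j => simp [ksLegal] at h1
  | some i =>
      cases b with
      | none => simp [ksLegal] at h1
      | some j =>
          simp only [ksLegal, Option.some.injEq] at h1
          obtain ⟨hfst, -⟩ := Sigma.mk.inj_iff.mp h1
          exact congrArg some hfst

variable {P : KSState n w → Measure (MCTraj (KSState n w))}

lemma ks_singleton_meas (hP : IsMCPathMeasure KC P) (c : Option (Fin n)) :
    P none ({ksLegal w hw c} : Set (MCTraj (KSState n w))) = ksWt n v v0 ε c := by
  haveI := hP.1 none
  have hanti : Antitone (fun L => MCCyl (List.ofFn fun k : Fin L => ksLegal w hw c k)) := by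
    refine antitone_nat_of_succ_le fun L ω hω => ?_
    have hω' := (mem_MCCyl_ofFn (ksLegal w hw c) ω).mp hω
    exact (mem_MCCyl_ofFn (ksLegal w hw c) ω).mpr fun k hk => hω' k (hk.trans (Nat.lt_succ_self L))
  rw [singleton_eq_iInter_cyl,
    Directed.measure_iInter (fun L => (measurableSet_MCCyl _).nullMeasurableSet)
      hanti.directed_ge ⟨0, measure_ne_top _ _⟩]
  have hval : ∀ L, P none (MCCyl (List.ofFn fun k : Fin (L + 2) => ksLegal w hw c k)) =
      ksWt n v v0 ε c := fun L => by
    rw [hP.2, ks_cyl_prob hw hv0 h2 hε1 hε2]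
  refine le_antisymm ((iInf_le _ 2).trans_eq (hval 0)) (le_iInf fun L => ?_)
  match L with
  | 0 =>
      refine (ksWt_le_one hv0 h2 hε1 hε2 c).trans ?_
      rw [hP.2]
      rw [show (List.ofFn fun k : Fin 0 => ksLegal w hw c k) = [] from List.ofFn_zero]
      exact le_refl 1
  | 1 =>
      refine (ksWt_le_one hv0 h2 hε1 hε2 c).trans ?_
      rw [hP.2]
      rw [show (List.ofFn fun k : Fin 1 => ksLegal w hw c k) = [ksLegal w hw c 0] by simp]
      rw [ks_legal_zero]
      rw [show mcCylProb KC none [none] = 1 from mcCylProb_single KC none]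
  | (L + 2) => exact (hval L).ge

lemma ks_good_meas (hP : IsMCPathMeasure KC P) :
    P none (⋃ c : Option (Fin n), ({ksLegal w hw c} : Set (MCTraj (KSState n w)))) = 1 := by
  rw [measure_iUnion
      (fun a b hab => Set.disjoint_singleton.mpr fun h => hab (ks_legal_inj hw h))
      (fun c => measurableSet_singleton_traj _), tsum_fintype]
  simp only [ks_singleton_meas hw hv0 h2 hε1 hε2 hP]
  rw [Fintype.sum_option]
  have hsum : ∑ i : Fin n, ksWt n v v0 ε (some i) =
      ENNReal.ofReal (ε / (((∑ i, v i : ℕ) : ℝ) - (v0 : ℝ))) * ((∑ i, v i : ℕ) : ENNReal) := by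
    show ∑ i : Fin n, _ * _ = _
    rw [← Finset.mul_sum]
    congr 1
    push_cast
    rfl
  rw [hsum]
  exact tsub_add_cancel_of_le (ks_xV_le_one hv0 h2 hε1 hε2)

lemma ks_reach_meas (hP : IsMCPathMeasure KC P) (C : Set (KSState n w)) :
    P none (MCReach Cᶜ) =
      ∑ c : Option (Fin n),
        if ∃ k, ksLegal w hw c k ∉ C then ksWt n v v0 ε c else 0 := by
  classical
  haveI := hP.1 none
  set D : Option (Fin n) → Set (MCTraj (KSState n w)) :=
    fun c => if ∃ k, ksLegal w hw c k ∉ C then {ksLegal w hw c} else ∅ with hD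
  have hDsub : ∀ c, D c ⊆ {ksLegal w hw c} := fun c => by
    simp only [hD]; split_ifs; exacts [le_refl _, Set.empty_subset _]
  have hUnion : P none (⋃ c, D c) =
      ∑ c : Option (Fin n),
        if ∃ k, ksLegal w hw c k ∉ C then ksWt n v v0 ε c else 0 := by
    rw [measure_iUnion
        (fun a b hab => Disjoint.mono (hDsub a) (hDsub b)
          (Set.disjoint_singleton.mpr fun h => hab (ks_legal_inj hw h)))
        (fun c => by
          simp only [hD]
          split_ifs
          exacts [measurableSet_singleton_traj _, MeasurableSet.empty]),
      tsum_fintype]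
    refine Finset.sum_congr rfl fun c _ => ?_
    simp only [hD]
    split_ifs with h
    · exact ks_singleton_meas hw hv0 h2 hε1 hε2 hP c
    · exact measure_empty
  have hlower : (⋃ c, D c) ⊆ MCReach Cᶜ := by
    intro ω hω
    obtain ⟨c, hc⟩ := Set.mem_iUnion.mp hω
    simp only [hD] at hc
    split_ifs at hc with h
    · obtain ⟨k, hk⟩ := h
      rw [Set.mem_singleton_iff] at hc
      exact ⟨k, by rw [hc]; exact hk⟩
    · exact absurd hc (Set.notMem_empty ω)
  have hGc : P none ((⋃ c : Option (Fin n),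
      ({ksLegal w hw c} : Set (MCTraj (KSState n w))))ᶜ) = 0 := by
    rw [measure_compl (MeasurableSet.iUnion fun c => measurableSet_singleton_traj _)
        (measure_ne_top _ _), ks_good_meas hw hv0 h2 hε1 hε2 hP, measure_univ, tsub_self]
  have hupper : MCReach Cᶜ ⊆ (⋃ c, D c) ∪
      (⋃ c : Option (Fin n), ({ksLegal w hw c} : Set (MCTraj (KSState n w))))ᶜ := by
    intro ω hω
    by_cases hg : ω ∈ ⋃ c : Option (Fin n), ({ksLegal w hw c} : Set (MCTraj (KSState n w)))
    · left
      obtain ⟨c, hc⟩ := Set.mem_iUnion.mp hg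
      rw [Set.mem_singleton_iff] at hc
      obtain ⟨k, hk⟩ := hω
      refine Set.mem_iUnion.mpr ⟨c, ?_⟩
      simp only [hD]
      rw [if_pos ⟨k, by rw [← hc]; exact hk⟩]
      exact hc
    · right; exact hg
  refine le_antisymm ?_ (hUnion ▸ measure_mono hlower)
  calc P none (MCReach Cᶜ) ≤ P none ((⋃ c, D c) ∪ _) := measure_mono hupper
    _ ≤ P none (⋃ c, D c) + _ := measure_union_le _ _
    _ = _ := by rw [hGc, add_zero, hUnion]

end Knapsack2

section Knapsack3

open scoped Classical

set_option linter.unusedSectionVars false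
set_option maxHeartbeats 1000000

variable {n : ℕ} {v w : Fin n → ℕ} {v0 : ℕ} {ε : ℝ}

/-- The candidate core as a finite set of states. -/
def ksCoreFinset (w : Fin n → ℕ) (I : Finset (Fin n)) : Finset (KSState n w) :=
  insert none (insert (some none)
    (I.biUnion fun i => Finset.univ.image fun j : Fin (w i) => (some (some ⟨i, j⟩) : KSState n w)))

lemma mem_ksCoreFinset {I : Finset (Fin n)} {s : KSState n w} :
    s ∈ ksCoreFinset w I ↔
      s = none ∨ s = some none ∨ ∃ i ∈ I, ∃ j : Fin (w i), s = some (some ⟨i, j⟩) := by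
  simp only [ksCoreFinset, Finset.mem_insert, Finset.mem_biUnion, Finset.mem_image,
    Finset.mem_univ, true_and]
  constructor
  · rintro (h | h | ⟨i, hi, j, hj⟩)
    · exact Or.inl h
    · exact Or.inr (Or.inl h)
    · exact Or.inr (Or.inr ⟨i, hi, j, hj.symm⟩)
  · rintro (h | h | ⟨i, hi, j, hj⟩)
    · exact Or.inl h
    · exact Or.inr (Or.inl h)
    · exact Or.inr (Or.inr ⟨i, hi, j, hj.symm⟩)

lemma ksCoreFinset_card (I : Finset (Fin n)) :
    (ksCoreFinset w I).card = 2 + ∑ i ∈ I, w i := by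
  have himg : ∀ i : Fin n,
      (Finset.univ.image fun j : Fin (w i) => (some (some ⟨i, j⟩) : KSState n w)).card = w i := by
    intro i
    rw [Finset.card_image_of_injective _ (fun a b hab => by
      have := Option.some.inj (Option.some.inj hab)
      exact sigma_mk_injective (β := fun i : Fin n => Fin (w i)) this)]
    simp
  have hdisj : ∀ x ∈ I, ∀ y ∈ I, x ≠ y →
      Disjoint (Finset.univ.image fun j : Fin (w x) => (some (some ⟨x, j⟩) : KSState n w))
        (Finset.univ.image fun j : Fin (w y) => (some (some ⟨y, j⟩) : KSState n w)) := by
    intro x _ y _ hxy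
    rw [Finset.disjoint_left]
    rintro s hs hs'
    simp only [Finset.mem_image, Finset.mem_univ, true_and] at hs hs'
    obtain ⟨j, rfl⟩ := hs
    obtain ⟨j', hj'⟩ := hs'
    have := Option.some.inj (Option.some.inj hj')
    exact hxy (congrArg Sigma.fst this).symm
  rw [ksCoreFinset, Finset.card_insert_of_notMem (by
      simp only [Finset.mem_insert, Finset.mem_biUnion, Finset.mem_image]
      push_neg
      exact ⟨by simp, fun i _ j _ => by simp⟩),
    Finset.card_insert_of_notMem (by
      simp only [Finset.mem_biUnion, Finset.mem_image]
      push_neg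
      exact fun i _ j _ => by simp),
    Finset.card_biUnion hdisj]
  rw [Finset.sum_congr rfl fun i _ => himg i]
  ring

variable (hw : ∀ i, 1 ≤ w i) (hv0 : v0 < ∑ i, v i) (h2 : 2 * v0 ≤ ∑ i, v i)
  (hε1 : 0 < ε) (hε2 : ε ≤ 1 / 3)

lemma ks_legal_item_val (i : Fin n) (j : Fin (w i)) :
    ksLegal w hw (some i) ((j : ℕ) + 1) = some (some ⟨i, j⟩) :=
  congrArg (fun x : Fin (w i) => (some (some (⟨i, x⟩ : (i : Fin n) × Fin (w i))) : KSState n w))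
    (Fin.ext (show min (j : ℕ) (w i - 1) = (j : ℕ) by have := j.2; omega))

include hv0 hε1 in
lemma ks_item_sum (J : Finset (Fin n)) :
    ∑ i ∈ J, ksWt n v v0 ε (some i) =
      ENNReal.ofReal (ε / (((∑ i, v i : ℕ) : ℝ) - (v0 : ℝ)) * ((∑ i ∈ J, v i : ℕ) : ℝ)) := by
  rw [ENNReal.ofReal_mul (ks_m_pos hv0 hε1).le, ENNReal.ofReal_natCast]
  show ∑ i ∈ J, _ * _ = _
  rw [← Finset.mul_sum]
  congr 1
  push_cast
  rfl

end Knapsack3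

set_option maxHeartbeats 1000000

/-- Correctness of the knapsack reduction: the chain `knapsackChain` has an
`ε`-core of cardinality at most `w₀ + 1` if and only if there is a set `I ⊆ {1, …, n}` of
items with `Σ_{i∈I} vᵢ > v₀` and `Σ_{i∈I} wᵢ < w₀`. -/
theorem knapsack_core_reduction (n : ℕ) (hn : 1 ≤ n) (v w : Fin n → ℕ) (v0 w0 : ℕ)
    (hv : ∀ i, 1 ≤ v i) (hw : ∀ i, 1 ≤ w i)
    (hv0 : v0 < ∑ i, v i) (h2 : 2 * v0 ≤ ∑ i, v i)
    (ε : ℝ) (hε1 : 0 < ε) (hε2 : ε ≤ 1 / 3)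
    (P : KSState n w → Measure (MCTraj (KSState n w)))
    (hP : IsMCPathMeasure (knapsackChain n v w v0 ε hw hv0 h2 hε1 hε2) P) :
    (∃ C : Set (KSState n w),
        IsMCCore (knapsackChain n v w v0 ε hw hv0 h2 hε1 hε2) P ε C ∧ C.ncard ≤ w0 + 1) ↔
      ∃ I : Finset (Fin n), v0 < ∑ i ∈ I, v i ∧ ∑ i ∈ I, w i < w0 := by
  classical
  have hVv : (0 : ℝ) < ((∑ i, v i : ℕ) : ℝ) - (v0 : ℝ) := by
    have : (v0 : ℝ) < ((∑ i, v i : ℕ) : ℝ) := by exact_mod_cast hv0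
    linarith
  have hεeq : ε / (((∑ i, v i : ℕ) : ℝ) - (v0 : ℝ)) * ((((∑ i, v i : ℕ) : ℝ)) - (v0 : ℝ)) = ε :=
    div_mul_cancel₀ _ (ne_of_gt hVv)
  have hm := ks_m_pos hv0 hε1
  constructor
  · rintro ⟨C, hcore, hcard⟩
    have hcore' : P none (MCReach Cᶜ) < ENNReal.ofReal ε := hcore
    rw [ks_reach_meas hw hv0 h2 hε1 hε2 hP C] at hcore'
    have hsink : ∀ k, ksLegal w hw (none : Option (Fin n)) k ∈ C := by
      by_contra hnil
      push_neg at hnil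
      have hle : ksWt n v v0 ε none ≤ ∑ c : Option (Fin n),
          if ∃ k, ksLegal w hw c k ∉ C then ksWt n v v0 ε c else 0 := by
        have h1 := Finset.single_le_sum
          (f := fun c : Option (Fin n) =>
            if ∃ k, ksLegal w hw c k ∉ C then ksWt n v v0 ε c else 0)
          (fun c _ => zero_le) (Finset.mem_univ (none : Option (Fin n)))
        simp only [if_pos hnil] at h1
        exact h1
      exact absurd (lt_of_le_of_lt ((ksWt_sink_ge hv0 h2 hε1 hε2).trans hle) hcore')
        (lt_irrefl _)
    have hs0 : (none : KSState n w) ∈ C := by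
      have := hsink 0; rwa [ks_legal_zero] at this
    have hs1 : (some none : KSState n w) ∈ C := hsink 1
    set I : Finset (Fin n) :=
      Finset.univ.filter (fun i => ∀ j : Fin (w i), some (some ⟨i, j⟩) ∈ C) with hI
    have hsumle : ∑ i ∈ Iᶜ, ksWt n v v0 ε (some i) ≤ ∑ c : Option (Fin n),
        if ∃ k, ksLegal w hw c k ∉ C then ksWt n v v0 ε c else 0 := by
      have heq : ∀ i ∈ Iᶜ, ksWt n v v0 ε (some i) =
          if ∃ k, ksLegal w hw (some i) k ∉ C then ksWt n v v0 ε (some i) else 0 := by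
        intro i hi
        rw [if_pos]
        rw [Finset.mem_compl, hI, Finset.mem_filter] at hi
        push_neg at hi
        obtain ⟨j, hj⟩ := hi (Finset.mem_univ i)
        exact ⟨(j : ℕ) + 1, by rw [ks_legal_item_val hw]; exact hj⟩
      rw [Finset.sum_congr rfl heq]
      have himg := Finset.sum_image (s := Iᶜ) (g := some)
        (f := fun c : Option (Fin n) =>
          if ∃ k, ksLegal w hw c k ∉ C then ksWt n v v0 ε c else 0)
        (fun a _ b _ h => Option.some.inj h)
      exact le_trans (le_of_eq himg.symm) (Finset.sum_le_sum_of_subset (Finset.subset_univ _))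
    have hlt := lt_of_le_of_lt hsumle hcore'
    rw [ks_item_sum hv0 hε1, ENNReal.ofReal_lt_ofReal_iff hε1] at hlt
    have hlt2 : ε / (((∑ i, v i : ℕ) : ℝ) - (v0 : ℝ)) * ((∑ i ∈ Iᶜ, v i : ℕ) : ℝ) <
        ε / (((∑ i, v i : ℕ) : ℝ) - (v0 : ℝ)) * ((((∑ i, v i : ℕ) : ℝ)) - (v0 : ℝ)) := by
      rw [hεeq]; exact hlt
    have hltr := (mul_lt_mul_iff_right₀ hm).mp hlt2
    have hnat : (∑ i ∈ Iᶜ, v i) + v0 < ∑ i, v i := by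
      have h' : ((∑ i ∈ Iᶜ, v i : ℕ) : ℝ) + (v0 : ℝ) < ((∑ i, v i : ℕ) : ℝ) := by linarith
      exact_mod_cast h'
    have hsplit : ∑ i ∈ Iᶜ, v i + ∑ i ∈ I, v i = ∑ i, v i := Finset.sum_compl_add_sum I v
    have hv0I : v0 < ∑ i ∈ I, v i := by omega
    have hDsub : ksCoreFinset w I ⊆ C.toFinset := by
      intro s hs
      rw [Set.mem_toFinset]
      rcases mem_ksCoreFinset.mp hs with h | h | ⟨i, hi, j, hj⟩
      · rw [h]; exact hs0
      · rw [h]; exact hs1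
      · rw [hj]
        rw [hI, Finset.mem_filter] at hi
        exact hi.2 j
    have hcard2 : 2 + ∑ i ∈ I, w i ≤ w0 + 1 := by
      have hc := Finset.card_le_card hDsub
      rw [ksCoreFinset_card, ← Set.ncard_eq_toFinset_card' C] at hc
      omega
    exact ⟨I, hv0I, by omega⟩
  · rintro ⟨I, hIv, hIw⟩
    refine ⟨(↑(ksCoreFinset w I) : Set (KSState n w)), ?_, ?_⟩
    · show P (knapsackChain n v w v0 ε hw hv0 h2 hε1 hε2).init
        (MCReach (↑(ksCoreFinset w I) : Set (KSState n w))ᶜ) < ENNReal.ofReal ε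
      show P none (MCReach (↑(ksCoreFinset w I) : Set (KSState n w))ᶜ) < ENNReal.ofReal ε
      rw [ks_reach_meas hw hv0 h2 hε1 hε2 hP]
      have hsink : ¬ ∃ k, ksLegal w hw (none : Option (Fin n)) k ∉
          (↑(ksCoreFinset w I) : Set (KSState n w)) := by
        push_neg
        intro k
        match k with
        | 0 =>
            rw [ks_legal_zero]
            exact Finset.mem_coe.mpr (mem_ksCoreFinset.mpr (Or.inl rfl))
        | (k + 1) =>
            exact Finset.mem_coe.mpr (mem_ksCoreFinset.mpr (Or.inr (Or.inl rfl)))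
      have hitem : ∀ i ∈ I, ¬ ∃ k, ksLegal w hw (some i) k ∉
          (↑(ksCoreFinset w I) : Set (KSState n w)) := by
        intro i hiI
        push_neg
        intro k
        match k with
        | 0 =>
            rw [ks_legal_zero]
            exact Finset.mem_coe.mpr (mem_ksCoreFinset.mpr (Or.inl rfl))
        | (k + 1) =>
            exact Finset.mem_coe.mpr (mem_ksCoreFinset.mpr (Or.inr (Or.inr
              ⟨i, hiI, ⟨min k (w i - 1), by have := hw i; omega⟩, rfl⟩)))
      have hb1 : (∑ c : Option (Fin n),
          if ∃ k, ksLegal w hw c k ∉ (↑(ksCoreFinset w I) : Set (KSState n w))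
          then ksWt n v v0 ε c else 0) ≤ ∑ i ∈ Iᶜ, ksWt n v v0 ε (some i) := by
        rw [Fintype.sum_option, if_neg hsink, zero_add]
        have hstep : ∀ i : Fin n,
            (if ∃ k, ksLegal w hw (some i) k ∉ (↑(ksCoreFinset w I) : Set (KSState n w))
              then ksWt n v v0 ε (some i) else 0) ≤
            (if i ∈ Iᶜ then ksWt n v v0 ε (some i) else 0) := by
          intro i
          by_cases hiI : i ∈ I
          · rw [if_neg (hitem i hiI)]
            exact zero_le
          · rw [if_pos (Finset.mem_compl.mpr hiI)]
            split_ifs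
            · exact le_refl _
            · exact zero_le
        refine le_trans (Finset.sum_le_sum fun i _ => hstep i) ?_
        rw [Finset.sum_ite_mem, Finset.univ_inter]
      refine lt_of_le_of_lt hb1 ?_
      rw [ks_item_sum hv0 hε1, ENNReal.ofReal_lt_ofReal_iff hε1]
      have hsplit : ∑ i ∈ Iᶜ, v i + ∑ i ∈ I, v i = ∑ i, v i := Finset.sum_compl_add_sum I v
      have hle : ∑ i ∈ I, v i ≤ ∑ i, v i := by omega
      have hc1 : (∑ i ∈ Iᶜ, v i) + v0 < ∑ i, v i := by omega
      have hcr : ((∑ i ∈ Iᶜ, v i : ℕ) : ℝ) < ((∑ i, v i : ℕ) : ℝ) - (v0 : ℝ) := by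
        have : ((∑ i ∈ Iᶜ, v i : ℕ) : ℝ) + (v0 : ℝ) < ((∑ i, v i : ℕ) : ℝ) := by
          exact_mod_cast hc1
        linarith
      calc ε / (((∑ i, v i : ℕ) : ℝ) - (v0 : ℝ)) * ((∑ i ∈ Iᶜ, v i : ℕ) : ℝ)
          < ε / (((∑ i, v i : ℕ) : ℝ) - (v0 : ℝ)) * ((((∑ i, v i : ℕ) : ℝ)) - (v0 : ℝ)) :=
            (mul_lt_mul_iff_right₀ hm).mpr hcr
        _ = ε := hεeq
    · rw [Set.ncard_coe_finset, ksCoreFinset_card]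
      omega
end

section
/- For every finite MDP M, every state s ∈ S, and every set R ⊆ S: P^max_{s₀}[Reach R] ≥ P^max_{s₀}[Reach {s}] · P^max_s[Reach R]. In particular, if P^max_s[Reach R] = 1 then P^max_{s₀}[Reach R] ≥ P^max_{s₀}[Reach {s}]. -/
open MeasureTheory

/-- A Markov decision process: an initial state, a non-empty finite set of available
actions at each state, and for each state and action a distribution over successors. -/
structure MDP (S : Type*) (A : Type*) where
  init : S
  avail : S → Finset A
  avail_nonempty : ∀ s, (avail s).Nonempty
  trans : S → A → PMF S

/-- The space of infinite paths `s₀ a₀ s₁ a₁ ⋯`; coordinate `i` is the pair `(sᵢ, aᵢ)`. -/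
def Traj (S : Type*) (A : Type*) := ℕ → S × A

instance {S A : Type*} : MeasurableSpace (Traj S A) :=
  @MeasurableSpace.pi ℕ (fun _ => S × A) (fun _ => ⊤)

/-- A strategy: to each finite history `s₀ a₀ … s_{k-1} a_{k-1}` and current state `s_k` it
assigns a probability distribution over the actions available at `s_k`. -/
structure Strategy {S A : Type*} (M : MDP S A) where
  act : List (S × A) → S → PMF A
  mem_avail : ∀ h s a, a ∈ (act h s).support → a ∈ M.avail s

variable {S A : Type*}

/-- The probability, starting in state `s` after history `h`, that the path continues with
exactly the finite sequence `pre` of (state, action) pairs. -/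
noncomputable def cylProb [DecidableEq S] (M : MDP S A) (σ : Strategy M) :
    List (S × A) → S → List (S × A) → ENNReal
  | _, _, [] => 1
  | h, s, (t, a) :: rest =>
      (if t = s then (σ.act h s) a else 0) *
        ∑' s' : S, (M.trans s a) s' * cylProb M σ (h ++ [(t, a)]) s' rest

/-- The cylinder set of all infinite paths whose first coordinates agree with `pre`. -/
def Cyl (pre : List (S × A)) : Set (Traj S A) :=
  {ω | ∀ i : Fin pre.length, ω i = pre.get i}

/-- `P` is the family of path measures induced (via the Ionescu–Tulcea construction) by the
strategies and start states of `M`: each `P σ s` is a probability measure on infinite paths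
whose value on every cylinder is the product of strategy- and transition-probabilities. -/
def IsPathMeasure [DecidableEq S] (M : MDP S A)
    (P : Strategy M → S → Measure (Traj S A)) : Prop :=
  (∀ σ s, IsProbabilityMeasure (P σ s)) ∧
    ∀ σ s pre, P σ s (Cyl pre) = cylProb M σ [] s pre

/-- `P^max_s[E]`, the supremum over all strategies of the probability of `E`. -/
noncomputable def pmax (M : MDP S A) (P : Strategy M → S → Measure (Traj S A))
    (s : S) (E : Set (Traj S A)) : ENNReal :=
  ⨆ σ : Strategy M, P σ s E

/-- `P^min_s[E]`, the infimum over all strategies of the probability of `E`. -/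
noncomputable def pmin (M : MDP S A) (P : Strategy M → S → Measure (Traj S A))
    (s : S) (E : Set (Traj S A)) : ENNReal :=
  ⨅ σ : Strategy M, P σ s E

/-- The set of paths that visit `R` at some point. -/
def Reach (R : Set S) : Set (Traj S A) := {ω | ∃ i, (ω i).1 ∈ R}

/-- The set of paths that stay in `C` forever. -/
def Stay (C : Set S) : Set (Traj S A) := {ω | ∀ i, (ω i).1 ∈ C}

/-- The set of paths that visit `R` within the first `n` steps. -/
def ReachN (n : ℕ) (R : Set S) : Set (Traj S A) := {ω | ∃ i ≤ n, (ω i).1 ∈ R}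

/-- The set of paths that stay in `C` for the first `n` steps. -/
def StayN (n : ℕ) (C : Set S) : Set (Traj S A) := {ω | ∀ i ≤ n, (ω i).1 ∈ C}

/-- `C` is an `ε`-core: the maximal probability of ever leaving `C` is `< ε`. -/
def IsCore [DecidableEq S] (M : MDP S A) (P : Strategy M → S → Measure (Traj S A))
    (ε : ℝ) (C : Set S) : Prop :=
  pmax M P M.init (Reach Cᶜ) < ENNReal.ofReal ε

/-- `C` is an `n`-step `ε`-core: the maximal probability of leaving `C` within `n` steps
is `< ε`. -/
def IsNCore [DecidableEq S] (M : MDP S A) (P : Strategy M → S → Measure (Traj S A))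
    (n : ℕ) (ε : ℝ) (C : Set S) : Prop :=
  pmax M P M.init (ReachN n Cᶜ) < ENNReal.ofReal ε


section Aux

variable {S A : Type*} [DecidableEq S]
set_option linter.unusedSectionVars false

lemma cylProb_nil (M : MDP S A) (σ : Strategy M) (h : List (S × A)) (t : S) :
    cylProb M σ h t [] = 1 := rfl

lemma cylProb_cons (M : MDP S A) (σ : Strategy M) (h : List (S × A)) (t u : S) (a : A)
    (rest : List (S × A)) :
    cylProb M σ h t ((u, a) :: rest) =
      (if u = t then (σ.act h t) a else 0) *
        ∑' s' : S, (M.trans t a) s' * cylProb M σ (h ++ [(u, a)]) s' rest := rfl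

lemma cylProb_ne_head (M : MDP S A) (σ : Strategy M) (h : List (S × A)) (t : S)
    (p : S × A) (rest : List (S × A)) (hne : p.1 ≠ t) :
    cylProb M σ h t (p :: rest) = 0 := by
  obtain ⟨u, a⟩ := p
  rw [cylProb_cons, if_neg hne, zero_mul]

lemma mem_Cyl {pre : List (S × A)} {ω : Traj S A} :
    ω ∈ Cyl pre ↔ ∀ j, (hj : j < pre.length) → ω j = pre[j] := by
  constructor
  · intro h j hj
    simpa [List.get_eq_getElem] using h ⟨j, hj⟩
  · intro h i
    simpa [List.get_eq_getElem] using h i.1 i.2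

lemma measurableSet_Cyl (pre : List (S × A)) : MeasurableSet (Cyl pre) := by
  have : Cyl pre = ⋂ i : Fin pre.length, (fun ω : Traj S A => ω i.1) ⁻¹' {pre.get i} := by
    ext ω
    simp [Cyl, Set.mem_iInter]
  rw [this]
  refine MeasurableSet.iInter fun i => ?_
  have hm : @Measurable (Traj S A) (S × A) _ ⊤ (fun ω => ω i.1) :=
    @measurable_pi_apply ℕ (fun _ => S × A) (fun _ => ⊤) i.1
  exact hm MeasurableSpace.measurableSet_top

end Aux

section Aux2

variable {S A : Type*} [DecidableEq S]
set_option linter.unusedSectionVars false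

/-- index data for the first-hit decomposition of `Reach T`. -/
def HT (T : Set S) : Set (List (S × A) × S × A) :=
  {v | (∀ p ∈ v.1, p.1 ∉ T) ∧ v.2.1 ∈ T}

def cylOf (v : List (S × A) × S × A) : List (S × A) := v.1 ++ [(v.2.1, v.2.2)]

lemma cyl_spec₁ {l g : List (S × A)} {ω : Traj S A} (h : ω ∈ Cyl (l ++ g)) :
    ∀ j, (hj : j < l.length) → ω j = l[j] := by
  intro j hj
  have hj' : j < (l ++ g).length := by simp; omega
  have := mem_Cyl.1 h j hj'
  rwa [List.getElem_append_left hj] at this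

lemma cyl_spec₂ {l g : List (S × A)} {ω : Traj S A} (h : ω ∈ Cyl (l ++ g)) :
    ∀ j, (hj : j < g.length) → ω (l.length + j) = g[j] := by
  intro j hj
  have hj' : l.length + j < (l ++ g).length := by simp; omega
  have := mem_Cyl.1 h (l.length + j) hj'
  rw [List.getElem_append_right (by omega)] at this
  simpa using this

lemma cyl_last {l : List (S × A)} {u : S} {b : A} {ω : Traj S A}
    (h : ω ∈ Cyl (l ++ [(u, b)])) : ω l.length = (u, b) := by
  have := cyl_spec₂ h 0 (by simp)
  simpa using this

/-- generic "first-hit uniqueness" step. -/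
lemma hit_not_lt {T : Set S} {ω : Traj S A} {n : ℕ} {r r' : List (S × A)} {u : S}
    (h2 : (ω (n + r.length)).1 = u) (hu : u ∈ T)
    (h1' : ∀ j, (hj : j < r'.length) → ω (n + j) = r'[j])
    (hr' : ∀ p ∈ r', p.1 ∉ T) :
    ¬ (r.length < r'.length) := by
  intro hlt
  apply hr' (r'[r.length]) (r'.getElem_mem hlt)
  rw [← h1' r.length hlt, h2]
  exact hu

lemma hit_unique {T : Set S} {ω : Traj S A} {n : ℕ} {r r' : List (S × A)} {u u' : S} {b b' : A}
    (h1 : ∀ j, (hj : j < r.length) → ω (n + j) = r[j])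
    (h2 : ω (n + r.length) = (u, b)) (hu : u ∈ T) (hr : ∀ p ∈ r, p.1 ∉ T)
    (h1' : ∀ j, (hj : j < r'.length) → ω (n + j) = r'[j])
    (h2' : ω (n + r'.length) = (u', b')) (hu' : u' ∈ T) (hr' : ∀ p ∈ r', p.1 ∉ T) :
    r = r' ∧ u = u' ∧ b = b' := by
  have hlen : r.length = r'.length := by
    have A1 := hit_not_lt (T := T) (by rw [h2]) hu h1' hr'
    have A2 := hit_not_lt (T := T) (by rw [h2']) hu' h1 hr
    omega
  have hrr : r = r' := by
    apply List.ext_getElem hlen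
    intro j hj hj'
    rw [← h1 j hj, ← h1' j hj']
  have : (u, b) = (u', b') := by rw [← h2, ← h2', hlen]
  exact ⟨hrr, congrArg Prod.fst this, congrArg Prod.snd this⟩

lemma reach_decomp (T : Set S) :
    (Reach T : Set (Traj S A)) = ⋃ i : HT (A := A) T, Cyl (cylOf i.1) := by
  classical
  ext ω
  constructor
  · rintro ⟨n0, hn0⟩
    have hex : ∃ n, (ω n).1 ∈ T := ⟨n0, hn0⟩
    set n := Nat.find hex with hn
    have hnT : (ω n).1 ∈ T := Nat.find_spec hex
    have hmin : ∀ j, j < n → (ω j).1 ∉ T := fun j hj => Nat.find_min hex hj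
    refine Set.mem_iUnion.2 ⟨⟨(List.ofFn (fun j : Fin n => ω j), (ω n).1, (ω n).2), ?_, hnT⟩, ?_⟩
    · intro p hp
      rw [List.mem_ofFn] at hp
      obtain ⟨j, rfl⟩ := hp
      exact hmin j j.2
    · rw [mem_Cyl]
      intro j hj
      simp only [cylOf, List.length_append, List.length_ofFn, List.length_singleton] at hj
      simp only [cylOf]
      rcases Nat.lt_or_ge j n with hlt | hge
      · rw [List.getElem_append_left (by simpa using hlt)]
        simp
      · have hje : j = n := by omega
        subst hje
        rw [List.getElem_append_right (by simp)]
        simp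
  · intro hω
    rw [Set.mem_iUnion] at hω
    obtain ⟨⟨⟨r, u, b⟩, hmem⟩, hcyl⟩ := hω
    refine ⟨r.length, ?_⟩
    have := cyl_last (l := r) (u := u) (b := b) hcyl
    rw [this]
    exact hmem.2

lemma reach_disjoint (T : Set S) :
    Pairwise (Function.onFun Disjoint (fun i : HT (A := A) T => Cyl (cylOf i.1))) := by
  rintro ⟨⟨r, u, b⟩, hr, hu⟩ ⟨⟨r', u', b'⟩, hr', hu'⟩ hij
  rw [Function.onFun, Set.disjoint_left]
  intro ω hω hω'
  apply hij
  have h1 : ∀ j, (hj : j < r.length) → ω (0 + j) = r[j] := by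
    intro j hj; rw [Nat.zero_add]; exact cyl_spec₁ hω j hj
  have h1' : ∀ j, (hj : j < r'.length) → ω (0 + j) = r'[j] := by
    intro j hj; rw [Nat.zero_add]; exact cyl_spec₁ hω' j hj
  have h2 : ω (0 + r.length) = (u, b) := by rw [Nat.zero_add]; exact cyl_last hω
  have h2' : ω (0 + r'.length) = (u', b') := by rw [Nat.zero_add]; exact cyl_last hω'
  obtain ⟨e1, e2, e3⟩ := hit_unique h1 h2 hu hr h1' h2' hu' hr'
  subst e1; subst e2; subst e3
  rfl

lemma measure_reach [Countable S] [Countable A] (M : MDP S A)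
    (P : Strategy M → S → Measure (Traj S A))
    (hP : IsPathMeasure M P) (σ : Strategy M) (t : S) (T : Set S) :
    P σ t (Reach T) = ∑' i : HT (A := A) T, cylProb M σ [] t (cylOf i.1) := by
  rw [reach_decomp T, measure_iUnion (reach_disjoint T) (fun i => measurableSet_Cyl _)]
  exact tsum_congr fun i => hP.2 σ t (cylOf i.1)

end Aux2

section Aux3

variable {S A : Type*} [DecidableEq S]
set_option linter.unusedSectionVars false

/-- the suffix of a history starting at the first occurrence of state `s`, if any. -/
def dropTo (s : S) : List (S × A) → Option (List (S × A))
  | [] => none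
  | p :: r => if p.1 = s then some (p :: r) else dropTo s r

lemma dropTo_append_none {s : S} {h : List (S × A)} (hd : dropTo s h = none)
    (l : List (S × A)) : dropTo s (h ++ l) = dropTo s l := by
  induction h with
  | nil => simp
  | cons p r ih =>
    rw [dropTo] at hd
    by_cases hp : p.1 = s
    · simp [hp] at hd
    · rw [if_neg hp] at hd
      rw [List.cons_append, dropTo, if_neg hp]
      exact ih hd

lemma dropTo_append_some {s : S} {h g : List (S × A)} (hd : dropTo s h = some g)
    (l : List (S × A)) : dropTo s (h ++ l) = some (g ++ l) := by
  induction h with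
  | nil => simp [dropTo] at hd
  | cons p r ih =>
    rw [dropTo] at hd
    by_cases hp : p.1 = s
    · rw [if_pos hp] at hd
      rw [List.cons_append, dropTo, if_pos hp]
      rw [Option.some_inj] at hd ⊢
      rw [← hd, List.cons_append]
    · rw [if_neg hp] at hd
      rw [List.cons_append, dropTo, if_neg hp]
      exact ih hd

/-- strategy that plays `σ₁`, but switches to `σ₂` (with reset history) on first visit of `s`. -/
noncomputable def comb (M : MDP S A) (s : S) (σ₁ σ₂ : Strategy M) : Strategy M where
  act h t :=
    match dropTo s h with
    | some g => σ₂.act g t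
    | none => if t = s then σ₂.act [] t else σ₁.act h t
  mem_avail h t a ha := by
    rcases hd : dropTo s h with _ | g
    · rw [hd] at ha
      by_cases ht : t = s
      · rw [if_pos ht] at ha
        exact σ₂.mem_avail [] t a ha
      · rw [if_neg ht] at ha
        exact σ₁.mem_avail h t a ha
    · rw [hd] at ha
      exact σ₂.mem_avail g t a ha

lemma comb_act_some {M : MDP S A} {s : S} (σ₁ σ₂ : Strategy M) {h g : List (S × A)}
    (hd : dropTo s h = some g) (t : S) :
    (comb M s σ₁ σ₂).act h t = σ₂.act g t := by
  simp only [comb, hd]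

lemma comb_act_none_ne {M : MDP S A} {s : S} (σ₁ σ₂ : Strategy M) {h : List (S × A)}
    (hd : dropTo s h = none) {t : S} (ht : t ≠ s) :
    (comb M s σ₁ σ₂).act h t = σ₁.act h t := by
  simp only [comb, hd, if_neg ht]

lemma comb_act_none_eq {M : MDP S A} {s : S} (σ₁ σ₂ : Strategy M) {h : List (S × A)}
    (hd : dropTo s h = none) :
    (comb M s σ₁ σ₂).act h s = σ₂.act [] s := by
  simp [comb, hd]

/-- after the switch, `comb` behaves like `σ₂` with truncated history. -/
lemma cylProb_comb_some {M : MDP S A} {s : S} (σ₁ σ₂ : Strategy M) :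
    ∀ (l h g : List (S × A)) (t : S), dropTo s h = some g →
      cylProb M (comb M s σ₁ σ₂) h t l = cylProb M σ₂ g t l := by
  intro l
  induction l with
  | nil => intro h g t _; rfl
  | cons p rest ih =>
    intro h g t hd
    obtain ⟨v, c⟩ := p
    rw [cylProb_cons, cylProb_cons, comb_act_some σ₁ σ₂ hd t]
    congr 1
    refine tsum_congr fun s' => ?_
    rw [ih (h ++ [(v, c)]) (g ++ [(v, c)]) s' (dropTo_append_some hd _)]

/-- at the moment of the switch. -/
lemma cylProb_comb_switch {M : MDP S A} {s : S} (σ₁ σ₂ : Strategy M) :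
    ∀ (l h : List (S × A)), dropTo s h = none →
      cylProb M (comb M s σ₁ σ₂) h s l = cylProb M σ₂ [] s l := by
  intro l
  induction l with
  | nil => intro h _; rfl
  | cons p rest ih =>
    intro h hd
    obtain ⟨v, c⟩ := p
    by_cases hv : v = s
    · rw [cylProb_cons, cylProb_cons, hv, comb_act_none_eq σ₁ σ₂ hd]
      congr 1
      refine tsum_congr fun s' => ?_
      have hdrop : dropTo s (h ++ [(s, c)]) = some [(s, c)] := by
        rw [dropTo_append_none hd]
        simp [dropTo]
      rw [cylProb_comb_some σ₁ σ₂ rest (h ++ [(s, c)]) [(s, c)] s' hdrop]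
      rfl
    · rw [cylProb_ne_head _ _ _ _ _ _ hv, cylProb_ne_head _ _ _ _ _ _ hv]

end Aux3

section Aux4

variable {S A : Type*} [DecidableEq S]
set_option linter.unusedSectionVars false

lemma tsum_cylProb_single (M : MDP S A) (σ : Strategy M) (h : List (S × A)) (t s : S) :
    (∑' a : A, cylProb M σ h t [(s, a)]) = if s = t then 1 else 0 := by
  have hsum : ∀ a : A, cylProb M σ h t [(s, a)] = if s = t then σ.act h t a else 0 := by
    intro a
    rw [cylProb_cons]
    simp [cylProb_nil, mul_one, (M.trans t a).tsum_coe]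
  by_cases hst : s = t
  · simp only [hsum, if_pos hst]
    exact (σ.act h t).tsum_coe
  · simp [hsum, if_neg hst]

/-- key splitting lemma: probability of a path that avoids `s`, then continues from `s`. -/
lemma cylProb_split (M : MDP S A) (s : S) (σ₁ σ₂ : Strategy M) :
    ∀ (l : List (S × A)), (∀ p ∈ l, p.1 ≠ s) →
      ∀ (h : List (S × A)) (t : S), dropTo s h = none →
        ∀ (g : List (S × A)) (c : A) (r' : List (S × A)), g = (s, c) :: r' →
          cylProb M (comb M s σ₁ σ₂) h t (l ++ g) =
            (∑' a : A, cylProb M σ₁ h t (l ++ [(s, a)])) * cylProb M σ₂ [] s g := by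
  intro l
  induction l with
  | nil =>
    intro _ h t hd g c r' hg
    subst hg
    simp only [List.nil_append]
    rw [tsum_cylProb_single M σ₁ h t s]
    by_cases hts : t = s
    · subst hts
      rw [cylProb_comb_switch σ₁ σ₂ _ h hd, if_pos rfl, one_mul]
    · rw [cylProb_ne_head _ _ _ _ _ _ (fun h' => hts h'.symm),
        if_neg (fun h' => hts h'.symm), zero_mul]
  | cons p l' ih =>
    intro hl h t hd g c r' hg
    obtain ⟨v, cv⟩ := p
    have hv : v ≠ s := hl (v, cv) List.mem_cons_self
    have hd' : dropTo s (h ++ [(v, cv)]) = none := by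
      rw [dropTo_append_none hd]
      simp [dropTo, hv]
    simp only [List.cons_append, cylProb_cons]
    by_cases hvt : v = t
    · simp only [if_pos hvt]
      rw [comb_act_none_ne σ₁ σ₂ hd (fun h' => hv (hvt.trans h'))]
      have hIH : ∀ s', cylProb M (comb M s σ₁ σ₂) (h ++ [(v, cv)]) s' (l' ++ g)
          = (∑' a : A, cylProb M σ₁ (h ++ [(v, cv)]) s' (l' ++ [(s, a)])) *
              cylProb M σ₂ [] s g :=
        fun s' => ih (fun q hq => hl q (List.mem_cons_of_mem _ hq)) _ s' hd' g c r' hg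
      rw [ENNReal.tsum_mul_left, mul_assoc]
      congr 1
      rw [ENNReal.tsum_comm, ← ENNReal.tsum_mul_right]
      refine tsum_congr fun s' => ?_
      rw [hIH s', ENNReal.tsum_mul_left, ← mul_assoc]
    · simp only [if_neg hvt, zero_mul, tsum_zero]

end Aux4

section Aux5

variable {S A : Type*} [DecidableEq S]
set_option linter.unusedSectionVars false

/-- the continuation starts in state `s`. -/
def Hd (s : S) : List (S × A) → S → Prop
  | [], u => u = s
  | p :: _, _ => p.1 = s

lemma comp_head {s : S} {v : List (S × A) × S × A} (hv : Hd s v.1 v.2.1) :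
    ∃ c r', cylOf v = (s, c) :: r' := by
  obtain ⟨r, u, b⟩ := v
  cases r with
  | nil =>
    have : u = s := hv
    subst this
    exact ⟨b, [], rfl⟩
  | cons p tl =>
    have hp : p.1 = s := hv
    refine ⟨p.2, tl ++ [(u, b)], ?_⟩
    simp only [cylOf, List.cons_append]
    rw [← hp]

lemma cylProb_vanish (M : MDP S A) (σ₂ : Strategy M) (s : S) {v : List (S × A) × S × A}
    (hnd : ¬ Hd s v.1 v.2.1) : cylProb M σ₂ [] s (cylOf v) = 0 := by
  obtain ⟨r, u, b⟩ := v
  cases r with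
  | nil =>
    have : u ≠ s := hnd
    exact cylProb_ne_head _ _ _ _ _ _ this
  | cons p tl =>
    have : p.1 ≠ s := hnd
    show cylProb M σ₂ [] s ((p :: tl) ++ [(u, b)]) = 0
    rw [List.cons_append]
    exact cylProb_ne_head _ _ _ _ _ _ this

/-- the equivalence identifying the first-hit index set for `{s}`. -/
def eS (s : S) : ({l : List (S × A) // ∀ p ∈ l, p.1 ∉ ({s} : Set S)} × A) ≃
    HT (A := A) ({s} : Set S) where
  toFun x := ⟨(x.1.1, s, x.2), x.1.2, rfl⟩
  invFun v := (⟨v.1.1, fun p hp => v.2.1 p hp⟩, v.1.2.2)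
  left_inv x := rfl
  right_inv v := by
    obtain ⟨⟨r, u, b⟩, h1, h2⟩ := v
    have : u = s := h2
    subst this
    rfl

lemma comp_subset {R : Set S} (l : List (S × A)) (v : List (S × A) × S × A)
    (hv : v ∈ HT (A := A) R) : Cyl (l ++ cylOf v) ⊆ Reach R := by
  intro ω hω
  refine ⟨l.length + v.1.length, ?_⟩
  have h1 := cyl_spec₂ hω v.1.length (by simp [cylOf])
  have h2 : (cylOf v)[v.1.length]'(by simp [cylOf]) = (v.2.1, v.2.2) := by
    simp [cylOf]
  rw [h2] at h1
  rw [h1]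
  exact hv.2

lemma comp_disjoint (s : S) (R : Set S) :
    Pairwise (Function.onFun Disjoint
      (fun i : ({l : List (S × A) // ∀ p ∈ l, p.1 ∉ ({s} : Set S)} ×
          {v : List (S × A) × S × A // v ∈ HT (A := A) R ∧ Hd s v.1 v.2.1}) =>
        Cyl (i.1.1 ++ cylOf i.2.1))) := by
  rintro ⟨⟨l, hl⟩, ⟨⟨r, u, b⟩, ⟨hrR, huR⟩, hhd⟩⟩ ⟨⟨l', hl'⟩, ⟨⟨r', u', b'⟩, ⟨hrR', huR'⟩, hhd'⟩⟩ hij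
  rw [Function.onFun, Set.disjoint_left]
  intro ω hω hω'
  apply hij
  obtain ⟨c, r₀, hcyl⟩ := comp_head (v := (r, u, b)) hhd
  obtain ⟨c', r₀', hcyl'⟩ := comp_head (v := (r', u', b')) hhd'
  -- stage 1 : the prefixes avoiding `s` agree
  have H1 : ∀ j, (hj : j < l.length) → ω (0 + j) = l[j] := by
    intro j hj; rw [Nat.zero_add]; exact cyl_spec₁ hω j hj
  have H1' : ∀ j, (hj : j < l'.length) → ω (0 + j) = l'[j] := by
    intro j hj; rw [Nat.zero_add]; exact cyl_spec₁ hω' j hj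
  have H2 : ω (0 + l.length) = (s, c) := by
    have h0 := cyl_spec₂ hω 0 (by simp [cylOf])
    rw [Nat.zero_add]
    have h1 : (cylOf (r, u, b))[0]'(by simp [cylOf]) = (s, c) := by simp [hcyl]
    exact h0.trans h1
  have H2' : ω (0 + l'.length) = (s, c') := by
    have h0 := cyl_spec₂ hω' 0 (by simp [cylOf])
    rw [Nat.zero_add]
    have h1 : (cylOf (r', u', b'))[0]'(by simp [cylOf]) = (s, c') := by simp [hcyl']
    exact h0.trans h1
  obtain ⟨el, -, -⟩ := hit_unique (T := ({s} : Set S)) H1 H2 rfl hl H1' H2' rfl hl'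
  subst el
  -- stage 2 : the continuations agree
  have G1 : ∀ j, (hj : j < r.length) → ω (l.length + j) = r[j] := by
    intro j hj
    have := cyl_spec₂ hω j (by simp [cylOf]; omega)
    simp only [cylOf] at this
    rwa [List.getElem_append_left hj] at this
  have G1' : ∀ j, (hj : j < r'.length) → ω (l.length + j) = r'[j] := by
    intro j hj
    have := cyl_spec₂ hω' j (by simp [cylOf]; omega)
    simp only [cylOf] at this
    rwa [List.getElem_append_left hj] at this
  have G2 : ω (l.length + r.length) = (u, b) := by
    have h0 := cyl_spec₂ hω r.length (by simp [cylOf])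
    have h1 : (cylOf (r, u, b))[r.length]'(by simp [cylOf]) = (u, b) := by simp [cylOf]
    exact h0.trans h1
  have G2' : ω (l.length + r'.length) = (u', b') := by
    have h0 := cyl_spec₂ hω' r'.length (by simp [cylOf])
    have h1 : (cylOf (r', u', b'))[r'.length]'(by simp [cylOf]) = (u', b') := by simp [cylOf]
    exact h0.trans h1
  obtain ⟨er, eu, eb⟩ := hit_unique (T := R) G1 G2 huR hrR G1' G2' huR' hrR'
  subst er; subst eu; subst eb
  rfl

end Aux5

section Main

variable {S A : Type*} [DecidableEq S]
set_option linter.unusedSectionVars false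

lemma tsum_subtype_eq_of_zero {α : Type*} {p q : α → Prop} (f : α → ENNReal)
    (hqp : ∀ a, q a → p a) (hz : ∀ a, p a → ¬ q a → f a = 0) :
    (∑' x : {a // p a}, f x.1) = ∑' x : {a // q a}, f x.1 := by
  have h1 : (∑' x : {a // p a}, f x.1) = ∑' x, Set.indicator {a | p a} f x :=
    tsum_subtype {a | p a} f
  have h2 : (∑' x : {a // q a}, f x.1) = ∑' x, Set.indicator {a | q a} f x :=
    tsum_subtype {a | q a} f
  rw [h1, h2]
  refine tsum_congr fun a => ?_
  by_cases hp : p a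
  · by_cases hq : q a
    · rw [Set.indicator_of_mem (show a ∈ {a | p a} from hp),
        Set.indicator_of_mem (show a ∈ {a | q a} from hq)]
    · rw [Set.indicator_of_mem (show a ∈ {a | p a} from hp),
        Set.indicator_of_notMem (show a ∉ {a | q a} from hq), hz a hp hq]
  · rw [Set.indicator_of_notMem (show a ∉ {a | p a} from hp),
      Set.indicator_of_notMem (show a ∉ {a | q a} from fun hq => hp (hqp a hq))]

lemma key_ineq [Fintype S] [Fintype A] (M : MDP S A)
    (P : Strategy M → S → Measure (Traj S A)) (hP : IsPathMeasure M P)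
    (s : S) (R : Set S) (σ₁ σ₂ : Strategy M) :
    P σ₁ M.init (Reach ({s} : Set S)) * P σ₂ s (Reach R) ≤
      P (comb M s σ₁ σ₂) M.init (Reach R) := by
  have hL : P σ₁ M.init (Reach ({s} : Set S)) =
      ∑' l : {l : List (S × A) // ∀ p ∈ l, p.1 ∉ ({s} : Set S)}, ∑' a : A,
        cylProb M σ₁ [] M.init (l.1 ++ [(s, a)]) := by
    rw [measure_reach M P hP σ₁ M.init {s}]
    rw [← (eS s).tsum_eq (fun i => cylProb M σ₁ [] M.init (cylOf i.1))]
    rw [ENNReal.tsum_prod']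
    exact tsum_congr fun l => tsum_congr fun a => rfl
  have hR : P σ₂ s (Reach R) =
      ∑' j : {v : List (S × A) × S × A // v ∈ HT (A := A) R ∧ Hd s v.1 v.2.1},
        cylProb M σ₂ [] s (cylOf j.1) := by
    rw [measure_reach M P hP σ₂ s R]
    exact tsum_subtype_eq_of_zero (fun v => cylProb M σ₂ [] s (cylOf v))
      (fun v hv => hv.1) (fun v h1 h2 => cylProb_vanish M σ₂ s (fun hd => h2 ⟨h1, hd⟩))
  rw [hL, hR]
  calc (∑' l : {l : List (S × A) // ∀ p ∈ l, p.1 ∉ ({s} : Set S)}, ∑' a : A,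
        cylProb M σ₁ [] M.init (l.1 ++ [(s, a)])) *
      (∑' j : {v : List (S × A) × S × A // v ∈ HT (A := A) R ∧ Hd s v.1 v.2.1},
        cylProb M σ₂ [] s (cylOf j.1))
      = ∑' i : ({l : List (S × A) // ∀ p ∈ l, p.1 ∉ ({s} : Set S)} ×
          {v : List (S × A) × S × A // v ∈ HT (A := A) R ∧ Hd s v.1 v.2.1}),
          cylProb M (comb M s σ₁ σ₂) [] M.init (i.1.1 ++ cylOf i.2.1) := by
        rw [ENNReal.tsum_prod', ← ENNReal.tsum_mul_right]
        refine tsum_congr fun l => ?_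
        rw [← ENNReal.tsum_mul_left]
        refine tsum_congr fun j => ?_
        obtain ⟨c, r', hg⟩ := comp_head j.2.2
        exact (cylProb_split M s σ₁ σ₂ l.1 (fun p hp => by simpa using l.2 p hp)
          [] M.init rfl (cylOf j.1) c r' hg).symm
    _ = P (comb M s σ₁ σ₂) M.init (⋃ i : ({l : List (S × A) // ∀ p ∈ l, p.1 ∉ ({s} : Set S)} ×
          {v : List (S × A) × S × A // v ∈ HT (A := A) R ∧ Hd s v.1 v.2.1}),
          Cyl (i.1.1 ++ cylOf i.2.1)) := by
        rw [measure_iUnion (comp_disjoint s R) (fun i => measurableSet_Cyl _)]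
        exact (tsum_congr fun i => hP.2 (comb M s σ₁ σ₂) M.init _).symm
    _ ≤ P (comb M s σ₁ σ₂) M.init (Reach R) :=
        measure_mono (Set.iUnion_subset fun i => comp_subset i.1.1 i.2.1 i.2.2.1)

end Main


/-- For every finite MDP `M`, state `s` and set `R ⊆ S`:
`P^max_{s₀}[Reach R] ≥ P^max_{s₀}[Reach {s}] · P^max_s[Reach R]`; in particular, if
`P^max_s[Reach R] = 1` then `P^max_{s₀}[Reach R] ≥ P^max_{s₀}[Reach {s}]`. -/
theorem pmax_reach_mul_le {S A : Type*} [Fintype S] [Fintype A] [DecidableEq S]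
    (M : MDP S A) (P : Strategy M → S → Measure (Traj S A)) (hP : IsPathMeasure M P)
    (s : S) (R : Set S) :
    pmax M P M.init (Reach ({s} : Set S)) * pmax M P s (Reach R) ≤
        pmax M P M.init (Reach R) ∧
      (pmax M P s (Reach R) = 1 →
        pmax M P M.init (Reach ({s} : Set S)) ≤ pmax M P M.init (Reach R)) := by
  have hmain : pmax M P M.init (Reach ({s} : Set S)) * pmax M P s (Reach R) ≤
      pmax M P M.init (Reach R) := by
    rw [pmax, pmax, ENNReal.iSup_mul]
    refine iSup_le fun σ₁ => ?_
    rw [ENNReal.mul_iSup]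
    refine iSup_le fun σ₂ => ?_
    exact le_trans (key_ineq M P hP s R σ₁ σ₂) (le_iSup (fun σ => P σ M.init (Reach R)) _)
  refine ⟨hmain, fun h1 => ?_⟩
  calc pmax M P M.init (Reach ({s} : Set S))
      = pmax M P M.init (Reach ({s} : Set S)) * pmax M P s (Reach R) := by rw [h1, mul_one]
    _ ≤ pmax M P M.init (Reach R) := hmain
end
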